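/- Let V be a finitely generated variety of lattices with subdirectly irreducible members S₁,…,S_r (all finite), and let (P,≤) be a finite poset. Then the lattice F_V(P,≤) freely generated by (P,≤) in V is finite, and it embeds as a subdirect product of lattices L₁,…,L_t where each L_j is the image of F_V(P,≤) under the homomorphism induced by a P-labelling of some S_k, with exactly one factor for each equivalence class (under automorphisms of S_k) of P-labellings. -/
import Mathlib

private lemma cast_sup' {r : ℕ} {S : Fin r → Type} [∀ k, Lattice (S k)]
    {k k' : Fin r} (h : k = k') (a b : S k) :
    (h ▸ (a ⊔ b) : S k') = (h ▸ a : S k') ⊔ (h ▸ b : S k') := by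
  subst h; rfl

private lemma cast_inf' {r : ℕ} {S : Fin r → Type} [∀ k, Lattice (S k)]
    {k k' : Fin r} (h : k = k') (a b : S k) :
    (h ▸ (a ⊓ b) : S k') = (h ▸ a : S k') ⊓ (h ▸ b : S k') := by
  subst h; rfl

theorem stmt_18
    (r : ℕ) (S : Fin r → Type) [∀ k, Lattice (S k)] [∀ k, Fintype (S k)]
    (V : (T : Type) → [inst : Lattice T] → Prop)
    (hVS : ∀ k, V (S k))
    (hfg : ∀ (T : Type) [Lattice T], V T →
      ∃ (ι : Type) (f : ι → Fin r) (e : T → ∀ i, S (f i)),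
        (∀ x y : T, e (x ⊔ y) = e x ⊔ e y) ∧ (∀ x y : T, e (x ⊓ y) = e x ⊓ e y) ∧
        Function.Injective e ∧ ∀ i, Function.Surjective fun x => e x i)
    (P : Type) [PartialOrder P] [Fintype P]
    (F : Type) [Lattice F] (hFV : V F)
    (η : P →o F)
    (hgen : ∀ S' : Sublattice F, Set.range ⇑η ⊆ ↑S' → ∀ x : F, x ∈ S')
    (huniv : ∀ (T : Type) [Lattice T], V T → ∀ g : P →o T,
      ∃! h : LatticeHom F T, ∀ p, h (η p) = g p) :
    Finite F ∧
    ∃ (t : ℕ) (k : Fin t → Fin r) (lab : ∀ j, P →o S (k j))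
      (h : ∀ j, LatticeHom F (S (k j))),
      (∀ j p, h j (η p) = lab j p) ∧
      (∀ j (S' : Sublattice (S (k j))), Set.range ⇑(lab j) ⊆ ↑S' → ∀ x, x ∈ S') ∧
      (∀ j, Function.Surjective (h j)) ∧
      (∀ x y : F, (∀ j, h j x = h j y) → x = y) ∧
      (∀ (k' : Fin r) (lab' : P →o S k'),
        (∀ S' : Sublattice (S k'), Set.range ⇑lab' ⊆ ↑S' → ∀ x, x ∈ S') →
        ∃! j : Fin t, ∃ hk : k j = k', ∃ α : S k' ≃o S k',
          ∀ p, α (hk ▸ lab j p) = lab' p) := by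
  classical
  obtain ⟨ι, f, e, hesup, heinf, heinj, hesurj⟩ := hfg F hFV
  -- coordinate lattice homs
  let coord : ∀ i, LatticeHom F (S (f i)) := fun i =>
    { toFun := fun x => e x i
      map_sup' := fun a b => congrFun (hesup a b) i
      map_inf' := fun a b => congrFun (heinf a b) i }
  -- type of generating labellings
  let GLab := {a : Σ k : Fin r, P →o S k //
      ∀ S' : Sublattice (S a.1), Set.range ⇑a.2 ⊆ ↑S' → ∀ x, x ∈ S'}
  let rel : GLab → GLab → Prop := fun a b =>
    ∃ h : a.1.1 = b.1.1, ∃ α : S b.1.1 ≃o S b.1.1, ∀ p, α (h ▸ a.1.2 p) = b.1.2 p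
  have hrefl : ∀ a, rel a a := fun a => ⟨rfl, OrderIso.refl _, fun p => rfl⟩
  have hsymm : ∀ {a b}, rel a b → rel b a := by
    rintro ⟨⟨ka, ga⟩, hga⟩ ⟨⟨kb, gb⟩, hgb⟩ ⟨hk, α, hα⟩
    dsimp only at hk
    subst hk
    refine ⟨rfl, α.symm, fun p => ?_⟩
    have h1 := hα p
    simp only at h1 ⊢
    rw [← h1, α.symm_apply_apply]
  have htrans : ∀ {a b c}, rel a b → rel b c → rel a c := by
    rintro ⟨⟨ka, ga⟩, hga⟩ ⟨⟨kb, gb⟩, hgb⟩ ⟨⟨kc, gc⟩, hgc⟩ ⟨hk, α, hα⟩ ⟨hk', α', hα'⟩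
    dsimp only at hk hk'
    subst hk; subst hk'
    refine ⟨rfl, α.trans α', fun p => ?_⟩
    have h1 := hα p
    have h2 := hα' p
    simp only at h1 h2 ⊢
    rw [OrderIso.trans_apply, h1, h2]
  let sd : Setoid GLab := ⟨rel, ⟨hrefl, fun h => hsymm h, fun h h' => htrans h h'⟩⟩
  haveI : ∀ k : Fin r, Finite (P →o S k) := fun k =>
    Finite.of_injective (fun g => (g : P → S k)) DFunLike.coe_injective
  haveI : Finite GLab := Subtype.finite
  haveI : Fintype (Quotient sd) := Fintype.ofFinite _
  let t := Fintype.card (Quotient sd)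
  let ee : Fin t ≃ Quotient sd := (Fintype.equivFin (Quotient sd)).symm
  let rep : Fin t → GLab := fun j => (ee j).out
  let kk : Fin t → Fin r := fun j => (rep j).1.1
  let lb : ∀ j, P →o S (kk j) := fun j => (rep j).1.2
  let hh : ∀ j, LatticeHom F (S (kk j)) := fun j => (huniv (S (kk j)) (hVS _) (lb j)).choose
  have hhspec : ∀ j p, hh j (η p) = lb j p := fun j =>
    (huniv (S (kk j)) (hVS _) (lb j)).choose_spec.1
  -- uniqueness of extensions
  have huniq : ∀ (k0 : Fin r) (h1 h2 : LatticeHom F (S k0)),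
      (∀ p, h1 (η p) = h2 (η p)) → h1 = h2 := by
    intro k0 h1 h2 hag
    obtain ⟨h0, -, hu⟩ := huniv (S k0) (hVS k0)
      ((⟨⇑h1, OrderHomClass.mono h1⟩ : F →o S k0).comp η)
    rw [hu h1 (fun p => rfl), hu h2 (fun p => (hag p).symm)]
  -- coordinate labellings generate
  have genCoord : ∀ i (S' : Sublattice (S (f i))),
      Set.range (fun p => e (η p) i) ⊆ ↑S' → ∀ y, y ∈ S' := by
    intro i S' hsub y
    obtain ⟨x, hx⟩ := hesurj i y
    have hmem : ∀ z : F, e z i ∈ S' := by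
      intro z
      have hz : z ∈ Sublattice.comap (coord i) S' := by
        refine hgen (Sublattice.comap (coord i) S') ?_ z
        rintro w ⟨p, rfl⟩
        exact hsub ⟨p, rfl⟩
      exact hz
    rw [← hx]; exact hmem x
  let cl : ι → GLab := fun i =>
    ⟨⟨f i, ⟨fun p => e (η p) i, fun a b hab => OrderHomClass.mono (coord i) (η.mono hab)⟩⟩,
      genCoord i⟩
  have hrelrep : ∀ a : GLab, rel (rep (ee.symm (Quotient.mk sd a))) a := by
    intro a
    refine Quotient.exact (s := sd) ?_
    show Quotient.mk sd ((ee (ee.symm (Quotient.mk sd a))).out) = Quotient.mk sd a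
    rw [Quotient.out_eq, ee.apply_symm_apply]
  -- joint injectivity
  have hinj : ∀ x y : F, (∀ j, hh j x = hh j y) → x = y := by
    intro x y hxy
    apply heinj
    funext i
    obtain ⟨hk, α, hα⟩ := hrelrep (cl i)
    set j := ee.symm (Quotient.mk sd (cl i)) with hj
    let comp : LatticeHom F (S (f i)) :=
      { toFun := fun z => α (hk ▸ hh j z)
        map_sup' := fun a b => by
          show α (hk ▸ hh j (a ⊔ b)) = α (hk ▸ hh j a) ⊔ α (hk ▸ hh j b)
          rw [map_sup, cast_sup' hk, map_sup]
        map_inf' := fun a b => by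
          show α (hk ▸ hh j (a ⊓ b)) = α (hk ▸ hh j a) ⊓ α (hk ▸ hh j b)
          rw [map_inf, cast_inf' hk, map_inf] }
    have hcegal : comp = coord i := by
      refine huniq (f i) comp (coord i) ?_
      intro p
      show α (hk ▸ hh j (η p)) = e (η p) i
      rw [hhspec j p]
      exact hα p
    have h1 : e x i = α (hk ▸ hh j x) := congrArg (fun g : LatticeHom F (S (f i)) => g x) hcegal.symm
    have h2 : e y i = α (hk ▸ hh j y) := congrArg (fun g : LatticeHom F (S (f i)) => g y) hcegal.symm
    rw [h1, h2, hxy j]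
  constructor
  · exact Finite.of_injective (fun x (j : Fin t) => hh j x)
      (fun x y hxy => hinj x y (fun j => congrFun hxy j))
  refine ⟨t, kk, lb, hh, hhspec, fun j => (rep j).2, ?_, hinj, ?_⟩
  · intro j y
    have hy : y ∈ Sublattice.map (hh j) ⊤ := by
      refine (rep j).2 (Sublattice.map (hh j) ⊤) ?_ y
      rintro w ⟨p, rfl⟩
      exact ⟨η p, trivial, hhspec j p⟩
    obtain ⟨x, -, hx⟩ := hy
    exact ⟨x, hx⟩
  · intro k' lab' hgen'
    let b : GLab := ⟨⟨k', lab'⟩, hgen'⟩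
    refine ⟨ee.symm (Quotient.mk sd b), hrelrep b, ?_⟩
    intro j' hj'
    have hb : rel (rep j') b := hj'
    have heq : ee j' = Quotient.mk sd b := by
      rw [← Quotient.out_eq (ee j')]
      exact Quotient.sound hb
    exact (ee.eq_symm_apply).2 heq
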